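/- arXiv:2101.06667 — 6 statements merged into one kernel-verified Lean document; each statement's English description precedes it below -/
import Mathlib

section
/- Let L be a multiplicative lattice and 𝔛 an M-closed subset. If i is a maximal element of the set of 𝔛-elements of L (ordered by the lattice order), then i is a prime element of L. -/
/-- A multiplicative lattice: a complete lattice with a commutative, associative
multiplication distributing over arbitrary joins, with top as identity. -/
class MultiplicativeLattice (L : Type*) extends CompleteLattice L, CommMonoid L where
  mul_sSup : ∀ (a : L) (S : Set L), a * sSup S = ⨆ b ∈ S, a * b
  one_eq_top : (1 : L) = ⊤

namespace MultiplicativeLattice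

variable {L : Type*}

/-- A subset is M-closed if it is closed under multiplication. -/
def MClosed [MultiplicativeLattice L] (X : Set L) : Prop :=
  ∀ a ∈ X, ∀ b ∈ X, a * b ∈ X

/-- A proper element `i` is an `X`-element if `a * b ≤ i` and `a ∉ X` imply `b ≤ i`. -/
def IsXElement [MultiplicativeLattice L] (X : Set L) (i : L) : Prop :=
  i ≠ ⊤ ∧ ∀ a b : L, a * b ≤ i → a ∉ X → b ≤ i

/-- A prime element. -/
def IsPrime [MultiplicativeLattice L] (p : L) : Prop :=
  p ≠ ⊤ ∧ ∀ a b : L, a * b ≤ p → a ≤ p ∨ b ≤ p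

/-- The residual `(i : a) = ⋁ {x | x * a ≤ i}`. -/
def residual [MultiplicativeLattice L] (i a : L) : L := sSup {x : L | x * a ≤ i}

/-- The radical of an element. -/
def radical [MultiplicativeLattice L] (a : L) : L :=
  sSup {x : L | IsCompactElement x ∧ ∃ n : ℕ, x ^ (n + 1) ≤ a}

/-- A primary element. -/
def IsPrimary [MultiplicativeLattice L] (i : L) : Prop :=
  i ≠ ⊤ ∧ ∀ a b : L, a * b ≤ i → a ≤ i ∨ b ≤ radical i

/-- A minimal prime element. -/
def IsMinimalPrime [MultiplicativeLattice L] (p : L) : Prop :=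
  IsPrime p ∧ ∀ q : L, IsPrime q → q ≤ p → q = p

/-- An `X`-multiplicatively closed subset: a nonempty set `A` of compact elements
containing `L_* \ X`, with `a₁ ∈ L_* \ X` and `a₂ ∈ A` implying `a₁ * a₂ ∈ A`. -/
def IsXMultClosed [MultiplicativeLattice L] (X A : Set L) : Prop :=
  A.Nonempty ∧ (∀ a ∈ A, IsCompactElement a) ∧
    ({c : L | IsCompactElement c} \ X) ⊆ A ∧
    ∀ a₁ ∈ ({c : L | IsCompactElement c} \ X), ∀ a₂ ∈ A, a₁ * a₂ ∈ A

end MultiplicativeLattice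

/-- A c-lattice: a compactly generated multiplicative lattice in which `⊤` is compact
and the product of compact elements is compact. -/
class CLattice (L : Type*) extends MultiplicativeLattice L where
  compactlyGenerated : ∀ x : L,
    x = sSup {c : L | IsCompactElement c ∧ c ≤ x}
  compact_top : IsCompactElement (⊤ : L)
  compact_mul : ∀ a b : L, IsCompactElement a →
    IsCompactElement b → IsCompactElement (a * b)

open MultiplicativeLattice CompleteLattice

theorem stmt9 {L : Type*} [MultiplicativeLattice L] (X : Set L) (hX : MClosed X)
    (i : L) (hi : IsXElement X i)
    (hmax : ∀ k : L, IsXElement X k → i ≤ k → i = k) : IsPrime i := by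
  have hmono : ∀ a x y : L, x ≤ y → a * x ≤ a * y := by
    intro a x y hxy
    have h : a * sSup {x, y} = (a * x) ⊔ (a * y) := by
      rw [MultiplicativeLattice.mul_sSup]; simp [iSup_or, iSup_sup_eq]
    rw [sSup_pair, sup_eq_right.mpr hxy] at h
    rw [h]; exact le_sup_left
  refine ⟨hi.1, fun a b hab => ?_⟩
  by_cases ha : a ≤ i
  · exact Or.inl ha
  right
  set r := residual i a with hr
  have hxr : ∀ x : L, x * a ≤ i → x ≤ r := fun x hx => le_sSup hx
  have hra : r * a ≤ i := by
    rw [hr, MultiplicativeLattice.residual, mul_comm, MultiplicativeLattice.mul_sSup]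
    exact iSup₂_le fun x hx => by rw [mul_comm]; exact hx
  have hi_mul : ∀ x : L, x * a ≤ x := fun x => by
    calc x * a ≤ x * ⊤ := hmono x a ⊤ le_top
    _ = x := by rw [← MultiplicativeLattice.one_eq_top, mul_one]
  have hir : i ≤ r := hxr i (hi_mul i)
  have hrtop : r ≠ ⊤ := by
    intro h
    apply ha
    have h1 : a = ⊤ * a := by rw [← MultiplicativeLattice.one_eq_top, one_mul]
    rw [h1, ← h]; exact hra
  have rX : IsXElement X r := by
    refine ⟨hrtop, fun c d hcd hc => ?_⟩
    apply hxr
    have : (c * d) * a ≤ r * a := by rw [mul_comm (c*d) a, mul_comm r a]; exact hmono a _ _ hcd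
    have h2 : c * (d * a) ≤ i := by rw [← mul_assoc]; exact le_trans this hra
    exact hi.2 c (d * a) h2 hc
  have := hmax r rX hir
  rw [this]
  exact hxr b (by rw [mul_comm]; exact hab)
end

section
/- Let L be a c-lattice and j the meet of all prime elements of L, with 𝔛 = (j] M-closed. Then there exists an 𝔛-element in L if and only if j is a prime element of L. -/
open MultiplicativeLattice CompleteLattice

section Aux

variable {L : Type*}

lemma mul_sup' [MultiplicativeLattice L] (a b c : L) : a * (b ⊔ c) = a * b ⊔ a * c := by
  have h := MultiplicativeLattice.mul_sSup a {b, c}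
  rw [sSup_pair, iSup_pair] at h
  exact h

lemma mul_le_mul_left'' [MultiplicativeLattice L] {b c : L} (h : b ≤ c) (a : L) :
    a * b ≤ a * c := by
  have : a * c = a * b ⊔ a * c := by rw [← mul_sup', sup_eq_right.mpr h]
  rw [this]; exact le_sup_left

lemma mul_le_right' [MultiplicativeLattice L] (a b : L) : a * b ≤ b := by
  calc a * b = b * a := mul_comm a b
    _ ≤ b * ⊤ := mul_le_mul_left'' le_top b
    _ = b := by rw [← MultiplicativeLattice.one_eq_top, mul_one]

lemma mul_le_left' [MultiplicativeLattice L] (a b : L) : a * b ≤ a := by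
  rw [mul_comm]; exact mul_le_right' b a

lemma compact_pow [CLattice L] (c : L) (hc : IsCompactElement c) :
    ∀ n : ℕ, IsCompactElement (c ^ (n + 1))
  | 0 => by simpa using hc
  | n + 1 => by
      rw [pow_succ]
      exact CLattice.compact_mul _ _ (compact_pow c hc n) hc

lemma exists_prime_of_pow_not_le [CLattice L] (i c : L)
    (hc : IsCompactElement c) (h : ∀ n : ℕ, ¬ c ^ (n + 1) ≤ i) :
    ∃ p : L, MultiplicativeLattice.IsPrime p ∧ ¬ c ≤ p := by
  set T : Set L := {x : L | ∀ n : ℕ, ¬ c ^ (n + 1) ≤ x} with hT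
  have hub : ∀ ch ⊆ T, IsChain (· ≤ ·) ch → ∀ y ∈ ch, ∃ ub ∈ T, ∀ z ∈ ch, z ≤ ub := by
    intro ch hch hchain y hy
    refine ⟨sSup ch, ?_, fun z hz => le_sSup hz⟩
    intro n hn
    obtain ⟨x, hx, hlex⟩ :=
      (CompleteLattice.isCompactElement_iff_le_of_directed_sSup_le L _).mp
        (compact_pow c hc n) ch ⟨y, hy⟩ hchain.directedOn hn
    exact hch hx n hlex
  have hiT : i ∈ T := h
  obtain ⟨m, _, hmT, hmax⟩ := zorn_le_nonempty₀ T hub i hiT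
  refine ⟨m, ⟨?_, ?_⟩, fun hle => hmT 0 (by simpa using hle)⟩
  · rintro rfl
    exact hmT 0 (by simp)
  · intro a b hab
    by_contra hcon
    push_neg at hcon
    obtain ⟨ha, hb⟩ := hcon
    have hma : ¬ (m ⊔ a) ∈ T := fun hmem => ha (le_sup_right.trans (hmax hmem le_sup_left))
    have hmb : ¬ (m ⊔ b) ∈ T := fun hmem => hb (le_sup_right.trans (hmax hmem le_sup_left))
    simp only [hT, Set.mem_setOf_eq, not_forall, not_not] at hma hmb
    obtain ⟨n, hn⟩ := hma
    obtain ⟨k, hk⟩ := hmb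
    have key : c ^ (n + k + 1 + 1) ≤ m := by
      have h1 : c ^ (n + k + 1 + 1) = c ^ (n + 1) * c ^ (k + 1) := by
        rw [← pow_add]; congr 1; omega
      rw [h1]
      calc c ^ (n + 1) * c ^ (k + 1) ≤ (m ⊔ a) * (m ⊔ b) := by
            calc c ^ (n + 1) * c ^ (k + 1) ≤ c ^ (n + 1) * (m ⊔ b) :=
                  mul_le_mul_left'' hk _
              _ ≤ (m ⊔ a) * (m ⊔ b) := by
                  rw [mul_comm _ (m ⊔ b), mul_comm _ (m ⊔ b)]
                  exact mul_le_mul_left'' hn _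
        _ ≤ m := by
            rw [mul_sup', mul_comm (m ⊔ a) m, mul_comm (m ⊔ a) b, mul_sup', mul_sup']
            simp only [sup_le_iff]
            exact ⟨⟨mul_le_left' m m, mul_le_left' m a⟩,
              ⟨mul_le_right' b m, le_of_eq_of_le (mul_comm b a) hab⟩⟩
    exact hmT _ key

end Aux


theorem stmt13 {L : Type*} [CLattice L] (hp : ∃ p : L, IsPrime p)
    (j : L) (hj : j = sInf {p : L | IsPrime p}) :
    (∃ i : L, IsXElement {x : L | x ≤ j} i) ↔ IsPrime j := by
  constructor
  · rintro ⟨i, hitop, hiX⟩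
    simp only [Set.mem_setOf_eq] at hiX
    -- i ≤ j
    have hij : i ≤ j := by
      by_contra hij
      exact hitop (top_le_iff.mp (hiX i ⊤ (by rw [← one_eq_top, mul_one]) hij))
    obtain ⟨p₀, hp₀⟩ := hp
    have hjp : ∀ p : L, IsPrime p → j ≤ p := fun p hpp => hj ▸ sInf_le hpp
    refine ⟨fun hjt => hp₀.1 (top_le_iff.mp (hjt ▸ hjp p₀ hp₀)), ?_⟩
    intro a b hab
    by_contra hcon
    push_neg at hcon
    obtain ⟨ha, hb⟩ := hcon
    -- compact witnesses
    obtain ⟨a', ⟨ha'c, ha'a⟩, ha'j⟩ : ∃ a' ∈ {c : L | IsCompactElement c ∧ c ≤ a}, ¬ a' ≤ j := by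
      by_contra hall
      push_neg at hall
      exact ha ((CLattice.compactlyGenerated a) ▸ sSup_le (fun x hx => hall x hx))
    obtain ⟨b', ⟨hb'c, hb'b⟩, hb'j⟩ : ∃ b' ∈ {c : L | IsCompactElement c ∧ c ≤ b}, ¬ b' ≤ j := by
      by_contra hall
      push_neg at hall
      exact hb ((CLattice.compactlyGenerated b) ▸ sSup_le (fun x hx => hall x hx))
    have hcj : a' * b' ≤ j := by
      calc a' * b' ≤ a' * b := mul_le_mul_left'' hb'b _
        _ ≤ a * b := by rw [mul_comm a' b, mul_comm a b]; exact mul_le_mul_left'' ha'a _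
        _ ≤ j := hab
    -- some power of a'*b' lies below i
    have hpow : ∃ n : ℕ, (a' * b') ^ (n + 1) ≤ i := by
      by_contra hnot
      push_neg at hnot
      obtain ⟨p, hpp, hcp⟩ := exists_prime_of_pow_not_le i (a' * b')
        (CLattice.compact_mul _ _ ha'c hb'c) hnot
      exact hcp (hcj.trans (hjp p hpp))
    obtain ⟨n, hn⟩ := hpow
    -- strip factors
    have strip : ∀ m : ℕ, (a' * b') ^ (m + 1) ≤ i → b' ≤ i := by
      intro m
      induction m with
      | zero => intro h; exact hiX a' b' (by simpa using h) ha'j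
      | succ k ih =>
          intro h
          have h1 : a' * (b' * (a' * b') ^ (k + 1)) ≤ i := by
            calc a' * (b' * (a' * b') ^ (k + 1)) = (a' * b') ^ (k + 1 + 1) := by
                  rw [← mul_assoc, ← pow_succ']
              _ ≤ i := h
          exact ih (hiX b' _ (hiX a' _ h1 ha'j) hb'j)
    exact hb'j ((strip n hn).trans hij)
  · intro hjp
    exact ⟨j, hjp.1, fun a b hab ha => (hjp.2 a b hab).resolve_left ha⟩
end

section
/- Let L be a c-lattice, j the meet of all prime elements of L, and 𝔛 = (j] an M-closed subset. A proper element i of L is an 𝔛-element if and only if i is a primary element of L and √i = j. -/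
open MultiplicativeLattice CompleteLattice

namespace StmtAux

variable {L : Type*}

lemma mul_sup' [MultiplicativeLattice L] (a b c : L) : a * (b ⊔ c) = a * b ⊔ a * c := by
  have h := MultiplicativeLattice.mul_sSup a {b, c}
  simp only [sSup_insert, csSup_singleton] at h
  rw [h, iSup_insert, iSup_singleton]

lemma mul_le_left' [MultiplicativeLattice L] (a b : L) : a * b ≤ a := by
  have h : a * ⊤ = a := by rw [← MultiplicativeLattice.one_eq_top, mul_one]
  calc a * b ≤ a * b ⊔ a * ⊤ := le_sup_left
    _ = a * (b ⊔ ⊤) := (mul_sup' a b ⊤).symm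
    _ = a := by rw [sup_top_eq, h]

lemma mul_le_right' [MultiplicativeLattice L] (a b : L) : a * b ≤ b := by
  rw [mul_comm]; exact mul_le_left' b a

lemma sup_mul_sup_le [MultiplicativeLattice L] (m a b : L) :
    (m ⊔ a) * (m ⊔ b) ≤ m ⊔ a * b := by
  rw [mul_sup']
  apply sup_le
  · exact le_sup_of_le_left (mul_le_right' _ _)
  · rw [mul_comm, mul_sup']
    apply sup_le
    · exact le_sup_of_le_left (mul_le_right' _ _)
    · rw [mul_comm]; exact le_sup_right

lemma mul_le_mul'' [MultiplicativeLattice L] {a b c d : L} (h1 : a ≤ c) (h2 : b ≤ d) :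
    a * b ≤ c * d := by
  have left : ∀ x : L, ∀ {y z : L}, y ≤ z → x * y ≤ x * z := by
    intro x y z h
    calc x * y ≤ x * y ⊔ x * z := le_sup_left
      _ = x * (y ⊔ z) := (mul_sup' x y z).symm
      _ = x * z := by rw [sup_eq_right.mpr h]
  calc a * b ≤ a * d := left a h2
    _ = d * a := mul_comm a d
    _ ≤ d * c := left d h1
    _ = c * d := mul_comm d c

lemma compact_pow [CLattice L] {c : L} (hc : IsCompactElement c) (n : ℕ) :
    IsCompactElement (c ^ (n + 1)) := by
  induction n with
  | zero => simpa using hc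
  | succ k ih =>
    rw [pow_succ]
    exact CLattice.compact_mul _ _ ih hc

/-- Krull-type existence: if no power of the compact `c` lies below `i`, there is a
prime above `i` avoiding `c`. -/
lemma exists_prime_avoiding [CLattice L] {c i : L} (hc : IsCompactElement c)
    (h : ∀ n : ℕ, ¬ c ^ (n + 1) ≤ i) :
    ∃ p : L, IsPrime p ∧ i ≤ p ∧ ¬ c ≤ p := by
  set S : Set L := {q : L | i ≤ q ∧ ∀ n : ℕ, ¬ c ^ (n + 1) ≤ q} with hS
  have chain_cond : ∀ C ⊆ S, IsChain (· ≤ ·) C → ∀ y ∈ C, ∃ ub ∈ S, ∀ z ∈ C, z ≤ ub := by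
    intro C hCS hchain y hy
    refine ⟨sSup C, ⟨(hCS hy).1.trans (le_sSup hy), ?_⟩, fun z hz => le_sSup hz⟩
    intro n hn
    have hcomp := compact_pow hc n
    rw [isCompactElement_iff_le_of_directed_sSup_le] at hcomp
    obtain ⟨x, hxC, hx⟩ := hcomp C ⟨y, hy⟩ hchain.directedOn hn
    exact (hCS hxC).2 n hx
  obtain ⟨m, him, hmax⟩ := zorn_le_nonempty₀ S chain_cond i ⟨le_rfl, h⟩
  · have hmS : m ∈ S := hmax.1
    refine ⟨m, ⟨?_, ?_⟩, hmS.1, fun hcm => hmS.2 0 (by simpa using hcm)⟩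
    · intro htop
      exact hmS.2 0 (by rw [htop]; exact le_top)
    · intro a b hab
      by_contra hcon
      push_neg at hcon
      obtain ⟨ha, hb⟩ := hcon
      have hma : m ⊔ a ∉ S := by
        intro hmem
        exact ha (le_sup_right.trans (hmax.2 hmem le_sup_left))
      have hmb : m ⊔ b ∉ S := by
        intro hmem
        exact hb (le_sup_right.trans (hmax.2 hmem le_sup_left))
      have ha' : ∃ n : ℕ, c ^ (n + 1) ≤ m ⊔ a := by
        by_contra h'
        push_neg at h'
        exact hma ⟨hmS.1.trans le_sup_left, h'⟩
      have hb' : ∃ n : ℕ, c ^ (n + 1) ≤ m ⊔ b := by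
        by_contra h'
        push_neg at h'
        exact hmb ⟨hmS.1.trans le_sup_left, h'⟩
      obtain ⟨n, hn⟩ := ha'
      obtain ⟨k, hk⟩ := hb'
      apply hmS.2 (n + k + 1)
      have key : c ^ (n + k + 1 + 1) = c ^ (n + 1) * c ^ (k + 1) := by
        rw [← pow_add]; ring_nf
      calc c ^ (n + k + 1 + 1) = c ^ (n + 1) * c ^ (k + 1) := key
        _ ≤ (m ⊔ a) * (m ⊔ b) := mul_le_mul'' hn hk
        _ ≤ m ⊔ a * b := sup_mul_sup_le m a b
        _ ≤ m := sup_le le_rfl hab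

end StmtAux

open StmtAux

theorem stmt15 {L : Type*} [CLattice L] (j : L) (hj : j = sInf {p : L | IsPrime p})
    (i : L) (hi : i ≠ ⊤) :
    IsXElement {x : L | x ≤ j} i ↔ (IsPrimary i ∧ radical i = j) := by
  constructor
  · rintro ⟨-, hX⟩
    have rad_le_j : radical i ≤ j := by
      apply _root_.sSup_le
      rintro x ⟨hxc, n, hxn⟩
      by_contra hxj
      have hxj' : x ∉ {y : L | y ≤ j} := hxj
      have key : ∀ m : ℕ, x ^ (m + 1) ≤ i → (⊤ : L) ≤ i := by
        intro m
        induction m with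
        | zero =>
          intro h1
          rw [pow_one] at h1
          refine hX x ⊤ ?_ hxj'
          rw [← MultiplicativeLattice.one_eq_top, mul_one]
          exact h1
        | succ k ih =>
          intro h1
          refine ih (hX x (x ^ (k + 1)) ?_ hxj')
          rw [← pow_succ']
          exact h1
      exact hi (top_le_iff.mp (key n hxn))
    have j_le_rad : j ≤ radical i := by
      conv_lhs => rw [CLattice.compactlyGenerated j]
      apply _root_.sSup_le
      rintro c ⟨hc, hcj⟩
      by_contra hcr
      have hpow : ∀ n : ℕ, ¬ c ^ (n + 1) ≤ i := fun n hn => hcr (le_sSup ⟨hc, n, hn⟩)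
      obtain ⟨p, hp, -, hcp⟩ := exists_prime_avoiding hc hpow
      exact hcp (hcj.trans (hj ▸ sInf_le hp))
    have rad_eq : radical i = j := le_antisymm rad_le_j j_le_rad
    refine ⟨⟨hi, fun a b hab => ?_⟩, rad_eq⟩
    by_cases hbj : b ≤ j
    · right; rw [rad_eq]; exact hbj
    · left; exact hX b a (by rwa [mul_comm]) hbj
  · rintro ⟨⟨-, hp⟩, hrad⟩
    refine ⟨hi, fun a b hab haj => ?_⟩
    rcases hp b a (by rwa [mul_comm]) with h | h
    · exact h
    · rw [hrad] at h
      exact absurd h haj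
end

section
/- Let L be a c-lattice, 𝔛 an M-closed subset, and k ∈ L with k ∉ 𝔛. If i₁ and i₂ are 𝔛-elements of L with i₁·k = i₂·k, then i₁ = i₂. Moreover, if i ∈ L is such that i·k is an 𝔛-element, then i·k = i. -/
open MultiplicativeLattice CompleteLattice


private lemma aux_mul_le_left {L : Type*} [MultiplicativeLattice L] (a b : L) : a * b ≤ a := by
  have h : a * sSup {b, ⊤} = ⨆ x ∈ ({b, ⊤} : Set L), a * x := MultiplicativeLattice.mul_sSup a _
  have hs : sSup ({b, ⊤} : Set L) = ⊤ := by simp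
  have hle : a * b ≤ a * ⊤ := by
    rw [hs] at h
    rw [h]
    exact le_iSup₂ (f := fun x (_ : x ∈ ({b, ⊤} : Set L)) => a * x) b (by simp)
  calc a * b ≤ a * ⊤ := hle
    _ = a := by rw [← MultiplicativeLattice.one_eq_top, mul_one]

theorem stmt16 {L : Type*} [CLattice L] (X : Set L) (hX : MClosed X)
    (k : L) (hk : k ∉ X) (i₁ i₂ : L) (h1 : IsXElement X i₁) (h2 : IsXElement X i₂)
    (heq : i₁ * k = i₂ * k) :
    i₁ = i₂ ∧ ∀ i : L, IsXElement X (i * k) → i * k = i := by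
  constructor
  · apply le_antisymm
    · exact h2.2 k i₁ (by rw [mul_comm, heq]; exact aux_mul_le_left i₂ k) hk
    · exact h1.2 k i₂ (by rw [mul_comm, ← heq]; exact aux_mul_le_left i₁ k) hk
  · intro i hi
    apply le_antisymm (aux_mul_le_left i k)
    exact hi.2 k i (by rw [mul_comm]) hk
end

section
/- Let L be a c-lattice, j a proper element, 𝔛 = (j], and suppose L_* \ (i] is an 𝔛-multiplicatively closed subset of L for a proper element i. Then i is an 𝔛-element of L. -/
open MultiplicativeLattice CompleteLattice


lemma mul_le_mul_lat {L : Type*} [MultiplicativeLattice L] {a b c d : L}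
    (h1 : a ≤ b) (h2 : c ≤ d) : a * c ≤ b * d := by
  have key : ∀ x y z : L, y ≤ z → x * y ≤ x * z := by
    intro x y z hyz
    have : x * sSup {y, z} = ⨆ b ∈ ({y, z} : Set L), x * b :=
      MultiplicativeLattice.mul_sSup x {y, z}
    have hs : sSup ({y, z} : Set L) = z := by
      rw [sSup_pair, sup_eq_right.mpr hyz]
    rw [hs] at this
    rw [this]
    exact le_biSup (fun b => x * b) (by simp)
  calc a * c ≤ a * d := key a c d h2
    _ = d * a := mul_comm a d
    _ ≤ d * b := key d a b h1
    _ = b * d := mul_comm d b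

theorem stmt18 {L : Type*} [CLattice L] (j i : L) (hj : j ≠ ⊤) (hi : i ≠ ⊤)
    (hA : IsXMultClosed {x : L | x ≤ j}
      {c : L | IsCompactElement c ∧ ¬ c ≤ i}) :
    IsXElement {x : L | x ≤ j} i := by
  refine ⟨hi, fun a b hab ha => ?_⟩
  by_contra hb
  -- find compact a' ≤ a with ¬ a' ≤ j
  have ha' : ∃ a' : L, IsCompactElement a' ∧ a' ≤ a ∧ ¬ a' ≤ j := by
    by_contra h
    push_neg at h
    apply ha
    have := CLattice.compactlyGenerated a
    simp only [Set.mem_setOf_eq]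
    rw [this]
    exact sSup_le fun c ⟨hc1, hc2⟩ => h c hc1 hc2
  have hb' : ∃ b' : L, IsCompactElement b' ∧ b' ≤ b ∧ ¬ b' ≤ i := by
    by_contra h
    push_neg at h
    apply hb
    have := CLattice.compactlyGenerated b
    rw [this]
    exact sSup_le fun c ⟨hc1, hc2⟩ => h c hc1 hc2
  obtain ⟨a', hca, haa, haj⟩ := ha'
  obtain ⟨b', hcb, hbb, hbi⟩ := hb'
  obtain ⟨-, -, -, hmul⟩ := hA
  have hmem : a' * b' ∈ {c : L | IsCompactElement c ∧ ¬ c ≤ i} :=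
    hmul a' ⟨hca, haj⟩ b' ⟨hcb, hbi⟩
  exact hmem.2 (le_trans (mul_le_mul_lat haa hbb) hab)
end

section
/- Let L be a c-lattice, j a proper element, 𝔛 = (j] an M-closed subset, and A an 𝔛-multiplicatively closed subset of L. If a ∈ L satisfies t ≰ a for all t ∈ A, then there exists an 𝔛-element i of L with a ≤ i such that i is maximal among elements c ≥ a with t ≰ c for all t ∈ A. -/
open MultiplicativeLattice CompleteLattice

theorem stmt19 {L : Type*} [CLattice L] (j : L) (hj : j ≠ ⊤) (A : Set L)
    (hA : IsXMultClosed {x : L | x ≤ j} A) (a : L) (ha : ∀ t ∈ A, ¬ t ≤ a) :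
    ∃ i : L, IsXElement {x : L | x ≤ j} i ∧ a ≤ i ∧ (∀ t ∈ A, ¬ t ≤ i) ∧
      ∀ c : L, a ≤ c → (∀ t ∈ A, ¬ t ≤ c) → i ≤ c → i = c := by
  classical
  obtain ⟨hne, hcomp, hsub, hmul⟩ := hA
  -- monotonicity of multiplication
  have hmono : ∀ x y z : L, y ≤ z → x * y ≤ x * z := by
    intro x y z hyz
    have h1 : x * sSup {y, z} = ⨆ b ∈ ({y, z} : Set L), x * b :=
      MultiplicativeLattice.mul_sSup x {y, z}
    have h2 : sSup ({y, z} : Set L) = z := by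
      rw [sSup_pair, sup_eq_right.mpr hyz]
    calc x * y ≤ ⨆ b ∈ ({y, z} : Set L), x * b := le_biSup (fun b => x * b) (by simp)
      _ = x * sSup {y, z} := h1.symm
      _ = x * z := by rw [h2]
  have hdistrib : ∀ x y z : L, x * (y ⊔ z) = x * y ⊔ x * z := by
    intro x y z
    have h1 : x * sSup {y, z} = ⨆ b ∈ ({y, z} : Set L), x * b :=
      MultiplicativeLattice.mul_sSup x {y, z}
    rw [sSup_pair] at h1
    rw [h1, iSup_pair]
  set S : Set L := {c : L | a ≤ c ∧ ∀ t ∈ A, ¬ t ≤ c} with hS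
  have haS : a ∈ S := ⟨le_rfl, ha⟩
  obtain ⟨i, hai, hmax⟩ := zorn_le_nonempty₀ S (fun c hcS hchain y hyc => by
    refine ⟨sSup c, ⟨le_trans (hcS hyc).1 (le_sSup hyc), ?_⟩, fun z hz => le_sSup hz⟩
    intro t ht hle
    have hdir : DirectedOn (· ≤ ·) c := hchain.directedOn
    obtain ⟨x, hxc, hx⟩ := (isCompactElement_iff_le_of_directed_sSup_le L t).mp
      (hcomp t ht) c ⟨y, hyc⟩ hdir hle
    exact (hcS hxc).2 t ht hx) a haS
  have hiS : i ∈ S := hmax.1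
  refine ⟨i, ⟨?_, ?_⟩, hiS.1, hiS.2, fun c hac htc hic => le_antisymm hic (hmax.2 ⟨hac, htc⟩ hic)⟩
  · rintro rfl
    obtain ⟨t, ht⟩ := hne
    exact hiS.2 t ht le_top
  · intro x y hxy hxj
    by_contra hyi
    -- find compact x' ≤ x with x' ≰ j
    have hxgen := CLattice.compactlyGenerated x
    have hx' : ∃ x' : L, IsCompactElement x' ∧ x' ≤ x ∧ ¬ x' ≤ j := by
      by_contra hcon
      push_neg at hcon
      have : x ≤ j := by
        rw [hxgen]
        apply _root_.sSup_le
        rintro z ⟨hz1, hz2⟩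
        exact hcon z hz1 hz2
      exact hxj this
    obtain ⟨x', hx'c, hx'x, hx'j⟩ := hx'
    -- i ⊔ y is strictly bigger, so some t ∈ A is ≤ i ⊔ y
    have hiy : ∃ t ∈ A, t ≤ i ⊔ y := by
      by_contra hcon
      push_neg at hcon
      have := hmax.2 ⟨le_trans hiS.1 le_sup_left, hcon⟩ le_sup_left
      exact hyi (le_trans le_sup_right this)
    obtain ⟨t, htA, hty⟩ := hiy
    have h1 : x' * t ≤ x' * (i ⊔ y) := hmono x' t (i ⊔ y) hty
    have h2 : x' * i ≤ i := by
      calc x' * i ≤ ⊤ * i := by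
            have := hmono i x' ⊤ le_top
            rwa [mul_comm i x', mul_comm i ⊤] at this
        _ = 1 * i := by rw [MultiplicativeLattice.one_eq_top]
        _ = i := one_mul i
    have h3 : x' * y ≤ i := le_trans (by
        have := hmono y x' x hx'x
        rwa [mul_comm y x', mul_comm y x] at this) hxy
    have h4 : x' * t ≤ i := by
      rw [hdistrib] at h1
      exact le_trans h1 (sup_le h2 h3)
    have h5 : x' * t ∈ A := hmul x' ⟨hx'c, hx'j⟩ t htA
    exact hiS.2 _ h5 h4
end
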